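/- arXiv:2008.11877 — 8 statements merged into one kernel-verified Lean document; each statement's English description precedes it below -/
import Mathlib

section
/- Let V be a finite-dimensional real inner product space, L : V → V a symmetric linear map, Δt > 0, and b ∈ V. Suppose u₀, u₁, q₀, q₁ ∈ V and r₀, r₁ ∈ ℝ satisfy the first-order SAV-DG step: (u₁ − u₀)/Δt = −L q₁ − r₁ b, q₀ = L u₀, q₁ = L u₁, and (r₁ − r₀)/Δt = (1/2) ⟪b, (u₁ − u₀)/Δt⟫. Then, with E(q, r) = (1/2)‖q‖² + r², the energy identity E(q₁, r₁) = E(q₀, r₀) − ‖u₁ − u₀‖²/Δt − (1/2)‖q₁ − q₀‖² − (r₁ − r₀)² holds. -/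
open RealInnerProductSpace

/-- Energy dissipation identity for the first-order SAV-DG scheme: with
`E(q, r) = (1/2)‖q‖² + r²`, one step of the scheme satisfies
`E(q₁, r₁) = E(q₀, r₀) − ‖u₁ − u₀‖²/Δt − (1/2)‖q₁ − q₀‖² − (r₁ − r₀)²`. -/
theorem sav_dg_first_order_energy_identity
    {V : Type*} [NormedAddCommGroup V] [InnerProductSpace ℝ V] [FiniteDimensional ℝ V]
    (L : V →ₗ[ℝ] V) (hL : ∀ v w : V, ⟪L v, w⟫ = ⟪v, L w⟫)
    (Δt : ℝ) (hΔt : 0 < Δt) (b : V)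
    (u₀ u₁ q₀ q₁ : V) (r₀ r₁ : ℝ)
    (h1 : (1 / Δt) • (u₁ - u₀) = -(L q₁) - r₁ • b)
    (h2 : q₀ = L u₀)
    (h3 : q₁ = L u₁)
    (h4 : (r₁ - r₀) / Δt = (1 / 2) * ⟪b, (1 / Δt) • (u₁ - u₀)⟫) :
    (1 / 2) * ‖q₁‖ ^ 2 + r₁ ^ 2 =
      (1 / 2) * ‖q₀‖ ^ 2 + r₀ ^ 2 - ‖u₁ - u₀‖ ^ 2 / Δt
        - (1 / 2) * ‖q₁ - q₀‖ ^ 2 - (r₁ - r₀) ^ 2 := by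
  have hne : Δt ≠ 0 := ne_of_gt hΔt
  -- Inner product of h1 with (u₁ - u₀)
  have key : ⟪(1 / Δt) • (u₁ - u₀), u₁ - u₀⟫ = ⟪-(L q₁) - r₁ • b, u₁ - u₀⟫ := by
    rw [h1]
  have hA : ⟪(1 / Δt) • (u₁ - u₀), u₁ - u₀⟫ = ‖u₁ - u₀‖ ^ 2 / Δt := by
    rw [real_inner_smul_left, real_inner_self_eq_norm_sq]
    ring
  have hLq : ⟪L q₁, u₁ - u₀⟫ = ⟪q₁, q₁ - q₀⟫ := by
    rw [hL, map_sub, ← h2, ← h3]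
  have hB : ⟪-(L q₁) - r₁ • b, u₁ - u₀⟫
      = -⟪q₁, q₁ - q₀⟫ - r₁ * ⟪b, u₁ - u₀⟫ := by
    rw [inner_sub_left, inner_neg_left, real_inner_smul_left, hLq]
  -- polarization
  have hpol : ⟪q₁, q₁ - q₀⟫
      = (‖q₁‖ ^ 2 - ‖q₀‖ ^ 2 + ‖q₁ - q₀‖ ^ 2) / 2 := by
    have h5 : ‖q₁ - q₀‖ ^ 2 = ‖q₁‖ ^ 2 - 2 * ⟪q₁, q₀⟫ + ‖q₀‖ ^ 2 := by
      rw [@norm_sub_sq_real]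
    have h6 : ⟪q₁, q₁ - q₀⟫ = ‖q₁‖ ^ 2 - ⟪q₁, q₀⟫ := by
      rw [inner_sub_right, real_inner_self_eq_norm_sq]
    linarith
  -- from h4
  have hD : ⟪b, u₁ - u₀⟫ = 2 * (r₁ - r₀) := by
    have := h4
    rw [real_inner_smul_right] at this
    field_simp at this
    have h' : (2 * (r₁ - r₀)) * Δt = inner ℝ b (u₁ - u₀) * Δt := by rw [← this]; ring
    have := mul_right_cancel₀ hne h'
    linarith
  rw [hA, hB, hpol, hD] at key
  have h7 : ‖u₁ - u₀‖ ^ 2 / Δt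
      = -((‖q₁‖ ^ 2 - ‖q₀‖ ^ 2 + ‖q₁ - q₀‖ ^ 2) / 2)
        - (r₁ ^ 2 - r₀ ^ 2 + (r₁ - r₀) ^ 2) := by
    rw [key]; ring
  linarith
end

section
/- Let V be a finite-dimensional real inner product space, L : V → V a symmetric linear map, Δt > 0, and b ∈ V. For every u₀ ∈ V and r₀ ∈ ℝ, there exists a unique triple (u₁, q₁, r₁) ∈ V × V × ℝ satisfying the first-order SAV-DG step: (u₁ − u₀)/Δt = −L q₁ − r₁ b, q₁ = L u₁, and (r₁ − r₀)/Δt = (1/2) ⟪b, (u₁ − u₀)/Δt⟫. This holds for any time step Δt > 0. -/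
open RealInnerProductSpace

/-- Unconditional unique solvability of the first-order SAV-DG step: for any
`Δt > 0`, `b ∈ V`, `u₀ ∈ V` and `r₀ ∈ ℝ`, there is a unique triple `(u₁, q₁, r₁)`
with `(u₁ − u₀)/Δt = −L q₁ − r₁ b`, `q₁ = L u₁`, and
`(r₁ − r₀)/Δt = (1/2)⟪b, (u₁ − u₀)/Δt⟫`. -/
theorem sav_dg_first_order_unique_solvability
    {V : Type*} [NormedAddCommGroup V] [InnerProductSpace ℝ V] [FiniteDimensional ℝ V]
    (L : V →ₗ[ℝ] V) (hL : ∀ v w : V, ⟪L v, w⟫ = ⟪v, L w⟫)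
    (Δt : ℝ) (hΔt : 0 < Δt) (b : V)
    (u₀ : V) (r₀ : ℝ) :
    ∃! t : V × V × ℝ,
      (1 / Δt) • (t.1 - u₀) = -(L t.2.1) - t.2.2 • b ∧
      t.2.1 = L t.1 ∧
      (t.2.2 - r₀) / Δt = (1 / 2) * ⟪b, (1 / Δt) • (t.1 - u₀)⟫ := by
  set c : ℝ := 1 / Δt with hc
  have hcpos : 0 < c := by positivity
  let A : V →ₗ[ℝ] V :=
  { toFun := fun v => c • v + L (L v) + ((1 / 2) * ⟪b, v⟫) • b
    map_add' := by
      intro x y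
      simp only [inner_add_right, map_add, smul_add, mul_add, add_smul]
      abel
    map_smul' := by
      intro m x
      simp only [inner_smul_right, map_smul, RingHom.id_apply, smul_add, smul_smul,
        smul_comm m c]
      congr 2
      ring }
  have hA : ∀ v, A v = c • v + L (L v) + ((1 / 2) * ⟪b, v⟫) • b := fun v => rfl
  have hinj : Function.Injective A := by
    rw [← LinearMap.ker_eq_bot, LinearMap.ker_eq_bot']
    intro v hv
    have h0 : ⟪A v, v⟫ = 0 := by rw [hv]; simp
    rw [hA, inner_add_left, inner_add_left, real_inner_smul_left, real_inner_smul_left,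
      hL, real_inner_self_eq_norm_sq] at h0
    have h1 : (0:ℝ) ≤ ⟪L v, L v⟫ := real_inner_self_nonneg
    have h2 : (0:ℝ) ≤ 1 / 2 * ⟪v, b⟫ * ⟪v, b⟫ := by
      nlinarith [mul_self_nonneg (⟪v, b⟫ : ℝ)]
    have hbv : ⟪b, v⟫ = ⟪v, b⟫ := real_inner_comm _ _
    rw [hbv] at h0
    have h3 : (0:ℝ) ≤ c * ‖v‖ ^ 2 := by positivity
    have hn : c * ‖v‖ ^ 2 = 0 := by linarith
    have : ‖v‖ = 0 := by
      by_contra h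
      have : 0 < ‖v‖ ^ 2 := by positivity
      nlinarith
    exact norm_eq_zero.mp this
  have hsurj : Function.Surjective A := (LinearMap.injective_iff_surjective).mp hinj
  obtain ⟨w, hw⟩ := hsurj (-(L (L u₀)) - r₀ • b)
  refine ⟨(u₀ + w, L (u₀ + w), r₀ + (1 / 2) * ⟪b, w⟫), ⟨?_, rfl, ?_⟩, ?_⟩
  · simp only [add_sub_cancel_left, map_add, add_smul]
    have h : c • w = A w - L (L w) - ((1 / 2) * ⟪b, w⟫) • b := by
      rw [hA]; abel
    rw [h, hw]; abel
  · simp only [add_sub_cancel_left, add_sub_cancel_left]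
    rw [real_inner_smul_right, hc]
    have hΔ : Δt ≠ 0 := ne_of_gt hΔt
    field_simp
  · rintro ⟨u, q, r⟩ ⟨h1, h2, h3⟩
    simp only at h1 h2 h3
    have hΔ : Δt ≠ 0 := ne_of_gt hΔt
    have hr : r = r₀ + (1 / 2) * ⟪b, u - u₀⟫ := by
      rw [real_inner_smul_right, hc] at h3
      field_simp at h3
      have h4 : (r - r₀) * 2 = ⟪b, u - u₀⟫ := by
        apply mul_right_cancel₀ hΔ
        linear_combination Δt * h3
      linarith
    have hAu : A (u - u₀) = -(L (L u₀)) - r₀ • b := by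
      rw [hA]
      rw [h2] at h1
      rw [h1, map_sub, map_sub, hr]
      simp only [add_smul]
      abel
    have huw : u - u₀ = w := hinj (by rw [hAu, hw])
    have hu : u = u₀ + w := by rw [← huw]; abel
    have : r = r₀ + (1 / 2) * ⟪b, w⟫ := by rw [hr, huw]
    simp [Prod.ext_iff, hu, h2, this]
end

section
/- Let V be a finite-dimensional real inner product space, L : V → V a symmetric linear map, Δt > 0, and b ∈ V. Suppose u₀, u₁, q₀, q₁ ∈ V and r₀, r₁ ∈ ℝ satisfy the second-order SAV-DG step: (u₁ − u₀)/Δt = −L ((q₀ + q₁)/2) − ((r₀ + r₁)/2) b, q₀ = L u₀, q₁ = L u₁, and (r₁ − r₀)/Δt = (1/2) ⟪b, (u₁ − u₀)/Δt⟫. Then, with E(q, r) = (1/2)‖q‖² + r², the energy identity E(q₁, r₁) = E(q₀, r₀) − ‖u₁ − u₀‖²/Δt holds. -/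
open RealInnerProductSpace

/-- Energy dissipation identity for the second-order SAV-DG scheme: with
`E(q, r) = (1/2)‖q‖² + r²`, one step of the Crank–Nicolson type SAV-DG scheme
satisfies `E(q₁, r₁) = E(q₀, r₀) − ‖u₁ − u₀‖²/Δt`. -/
theorem sav_dg_second_order_energy_identity
    {V : Type*} [NormedAddCommGroup V] [InnerProductSpace ℝ V] [FiniteDimensional ℝ V]
    (L : V →ₗ[ℝ] V) (hL : ∀ v w : V, ⟪L v, w⟫ = ⟪v, L w⟫)
    (Δt : ℝ) (hΔt : 0 < Δt) (b : V)
    (u₀ u₁ q₀ q₁ : V) (r₀ r₁ : ℝ)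
    (h1 : (1 / Δt) • (u₁ - u₀) = -(L ((1 / 2 : ℝ) • (q₀ + q₁))) - ((r₀ + r₁) / 2) • b)
    (h2 : q₀ = L u₀)
    (h3 : q₁ = L u₁)
    (h4 : (r₁ - r₀) / Δt = (1 / 2) * ⟪b, (1 / Δt) • (u₁ - u₀)⟫) :
    (1 / 2) * ‖q₁‖ ^ 2 + r₁ ^ 2 =
      (1 / 2) * ‖q₀‖ ^ 2 + r₀ ^ 2 - ‖u₁ - u₀‖ ^ 2 / Δt := by
  set w := u₁ - u₀ with hw
  have hLw : L w = q₁ - q₀ := by rw [hw, map_sub, h2, h3]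
  have key : ⟪(1 / Δt) • w, w⟫ = ⟪-(L ((1 / 2 : ℝ) • (q₀ + q₁))) - ((r₀ + r₁) / 2) • b, w⟫ := by
    rw [h1]
  have hL1 : ⟪L ((1 / 2 : ℝ) • (q₀ + q₁)), w⟫ = (1/2) * (‖q₁‖ ^ 2 - ‖q₀‖ ^ 2) := by
    rw [map_smul, real_inner_smul_left, hL, hLw, inner_add_left, inner_sub_right,
      inner_sub_right, real_inner_self_eq_norm_sq, real_inner_self_eq_norm_sq,
      real_inner_comm q₀ q₁]
    ring
  have hbw : ⟪b, (1 / Δt) • w⟫ = (1 / Δt) * ⟪b, w⟫ := real_inner_smul_right _ _ _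
  have hΔ : Δt ≠ 0 := hΔt.ne'
  have hr : r₁ ^ 2 - r₀ ^ 2 = ((r₀ + r₁) / 2) * ⟪b, w⟫ := by
    rw [hbw] at h4
    have h4' : (r₁ - r₀) = (1 / 2) * ⟪b, w⟫ := by
      field_simp at h4
      have hc : ((r₁ - r₀) * 2) * Δt = ⟪b, w⟫ * Δt := by rw [h4]
      have := mul_right_cancel₀ hΔ hc
      linarith
    have : r₁ ^ 2 - r₀ ^ 2 = (r₁ + r₀) * (r₁ - r₀) := by ring
    rw [this, h4']
    ring
  have hwn : ⟪(1 / Δt) • w, w⟫ = (1 / Δt) * ‖w‖ ^ 2 := by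
    rw [real_inner_smul_left, real_inner_self_eq_norm_sq]
  have key2 : (1 / Δt) * ‖w‖ ^ 2 =
      -(1/2) * (‖q₁‖ ^ 2 - ‖q₀‖ ^ 2) - ((r₀ + r₁) / 2) * ⟪b, w⟫ := by
    rw [← hwn, key, inner_sub_left, inner_neg_left, real_inner_smul_left, hL1]
    ring
  have hdiv : ‖w‖ ^ 2 / Δt = (1 / Δt) * ‖w‖ ^ 2 := by ring
  rw [hdiv]
  linarith [key2, hr]
end

section
/- Let V be a finite-dimensional real inner product space, L : V → V a symmetric linear map, Δt > 0, and b ∈ V. For every u₀ ∈ V and r₀ ∈ ℝ, there exists a unique triple (u₁, q₁, r₁) ∈ V × V × ℝ satisfying the second-order SAV-DG step: (u₁ − u₀)/Δt = −L ((L u₀ + q₁)/2) − ((r₀ + r₁)/2) b, q₁ = L u₁, and (r₁ − r₀)/Δt = (1/2) ⟪b, (u₁ − u₀)/Δt⟫. This holds for any time step Δt > 0. -/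
open RealInnerProductSpace

/-- Unconditional unique solvability of the second-order SAV-DG step: for any
`Δt > 0`, `b ∈ V`, `u₀ ∈ V` and `r₀ ∈ ℝ`, there is a unique triple `(u₁, q₁, r₁)`
with `(u₁ − u₀)/Δt = −L((L u₀ + q₁)/2) − ((r₀ + r₁)/2) b`, `q₁ = L u₁`, and
`(r₁ − r₀)/Δt = (1/2)⟪b, (u₁ − u₀)/Δt⟫`. -/
theorem sav_dg_second_order_unique_solvability
    {V : Type*} [NormedAddCommGroup V] [InnerProductSpace ℝ V] [FiniteDimensional ℝ V]
    (L : V →ₗ[ℝ] V) (hL : ∀ v w : V, ⟪L v, w⟫ = ⟪v, L w⟫)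
    (Δt : ℝ) (hΔt : 0 < Δt) (b : V)
    (u₀ : V) (r₀ : ℝ) :
    ∃! t : V × V × ℝ,
      (1 / Δt) • (t.1 - u₀) =
        -(L ((1 / 2 : ℝ) • (L u₀ + t.2.1))) - ((r₀ + t.2.2) / 2) • b ∧
      t.2.1 = L t.1 ∧
      (t.2.2 - r₀) / Δt = (1 / 2) * ⟪b, (1 / Δt) • (t.1 - u₀)⟫ := by
  have hΔt' : Δt ≠ 0 := ne_of_gt hΔt
  -- rank one operator v ↦ ⟪b,v⟫ • b
  let B : V →ₗ[ℝ] V :=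
    { toFun := fun v => ⟪b, v⟫ • b
      map_add' := fun x y => by simp [inner_add_right, add_smul]
      map_smul' := fun c x => by
        simp [real_inner_smul_right, mul_smul] }
  let T : V →ₗ[ℝ] V := LinearMap.id + (Δt / 2) • (L ∘ₗ L) + (Δt / 4) • B
  have hTapp : ∀ u, T u = u + (Δt / 2) • L (L u) + (Δt / 4) • (⟪b, u⟫ • b) := fun u => rfl
  have hinj : Function.Injective T := by
    rw [← LinearMap.ker_eq_bot, LinearMap.ker_eq_bot']
    intro u hu
    have h0 : ⟪T u, u⟫ = 0 := by rw [hu, inner_zero_left]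
    have hexp : ⟪T u, u⟫ = ‖u‖ ^ 2 + (Δt / 2) * ‖L u‖ ^ 2 + (Δt / 4) * ⟪b, u⟫ ^ 2 := by
      rw [hTapp, inner_add_left, inner_add_left, real_inner_smul_left, real_inner_smul_left,
        real_inner_smul_left, hL (L u) u, real_inner_self_eq_norm_sq,
        real_inner_self_eq_norm_sq]
      ring
    have h1 : (0:ℝ) ≤ (Δt / 2) * ‖L u‖ ^ 2 := by positivity
    have h2 : (0:ℝ) ≤ (Δt / 4) * ⟪b, u⟫ ^ 2 := by positivity
    have h3 : ‖u‖ ^ 2 + (Δt / 2) * ‖L u‖ ^ 2 + (Δt / 4) * ⟪b, u⟫ ^ 2 = 0 := by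
      rw [← hexp]; exact h0
    have h4 : ‖u‖ = 0 := by nlinarith [sq_nonneg ‖u‖, norm_nonneg u]
    exact norm_eq_zero.mp h4
  have hsurj := (LinearMap.injective_iff_surjective).mp hinj
  obtain ⟨u₁, hu₁⟩ :=
    hsurj (u₀ - (Δt / 2) • L (L u₀) - (Δt * r₀) • b + (Δt / 4) • (⟪b, u₀⟫ • b))
  have hu₁' : u₁ + (Δt / 2) • L (L u₁) + (Δt / 4) • (⟪b, u₁⟫ • b)
      = u₀ - (Δt / 2) • L (L u₀) - (Δt * r₀) • b + (Δt / 4) • (⟪b, u₀⟫ • b) := by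
    rw [← hTapp]; exact hu₁
  refine ⟨(u₁, L u₁, r₀ + (1/2) * ⟪b, u₁ - u₀⟫), ⟨?_, rfl, ?_⟩, ?_⟩
  · -- the first equation
    have key : u₁ - u₀ =
        Δt • (-(L ((1 / 2 : ℝ) • (L u₀ + L u₁)))
          - ((r₀ + (r₀ + (1/2) * ⟪b, u₁ - u₀⟫)) / 2) • b) := by
      simp only [map_smul, map_add, inner_sub_right, smul_add]
      linear_combination (norm := module) hu₁'
    show (1 / Δt) • (u₁ - u₀) =
        -(L ((1 / 2 : ℝ) • (L u₀ + L u₁)))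
          - ((r₀ + (r₀ + (1/2) * ⟪b, u₁ - u₀⟫)) / 2) • b
    conv_lhs => rw [key]
    rw [smul_smul, one_div_mul_cancel hΔt', one_smul]
  · -- the third equation
    show (r₀ + (1/2) * ⟪b, u₁ - u₀⟫ - r₀) / Δt = (1/2) * ⟪b, (1 / Δt) • (u₁ - u₀)⟫
    rw [real_inner_smul_right]
    field_simp
    ring
  · -- uniqueness
    rintro ⟨u, q, r⟩ ⟨h1, h2, h3⟩
    dsimp only at h1 h2 h3 ⊢
    subst h2
    -- recover r
    rw [real_inner_smul_right] at h3
    have hr : r = r₀ + (1/2) * ⟪b, u - u₀⟫ := by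
      field_simp at h3
      have h4 : (r - r₀) * 2 * Δt = ⟪b, u - u₀⟫ * Δt := by linear_combination Δt * h3
      have h5 := mul_right_cancel₀ hΔt' h4
      linarith
    -- recover the vector equation
    have key2 : u - u₀ =
        Δt • (-(L ((1 / 2 : ℝ) • (L u₀ + L u))) - ((r₀ + r) / 2) • b) := by
      rw [← h1, smul_smul, mul_one_div_cancel hΔt', one_smul]
    have hTu : T u = u₀ - (Δt / 2) • L (L u₀) - (Δt * r₀) • b + (Δt / 4) • (⟪b, u₀⟫ • b) := by
      rw [hTapp]
      rw [hr] at key2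
      simp only [map_smul, map_add, inner_sub_right, smul_add] at key2
      linear_combination (norm := module) key2
    have huu : u = u₁ := hinj (hTu.trans hu₁.symm)
    subst huu
    simp [hr]
end

section
/- Let V be a finite-dimensional real inner product space, L : V → V a symmetric linear map, Δt > 0, b ∈ V, and B = (I + Δt L²)⁻¹. Suppose u₀, u₁, q₁ ∈ V and r₀, r₁ ∈ ℝ satisfy the first-order SAV-DG step: (u₁ − u₀)/Δt = −L q₁ − r₁ b, q₁ = L u₁, and (r₁ − r₀)/Δt = (1/2) ⟪b, (u₁ − u₀)/Δt⟫. Set ξ = u₀ − Δt r₀ b + (Δt/2) ⟪b, u₀⟫ b. Then r₁ = r₀ − (1/2)⟪b, u₀⟫ + (1/2) R, where R = ⟪b, B ξ⟫ / (1 + (Δt/2) ⟪b, B b⟫). -/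
open RealInnerProductSpace

/-- Pre-evaluation formula for the auxiliary variable in the first-order SAV-DG
scheme: with `B = (I + Δt L²)⁻¹` and `ξ = u₀ − Δt r₀ b + (Δt/2)⟪b, u₀⟫ b`, one has
`r₁ = r₀ − (1/2)⟪b, u₀⟫ + (1/2) R` where `R = ⟪b, B ξ⟫ / (1 + (Δt/2)⟪b, B b⟫)`. -/
theorem sav_dg_first_order_pre_evaluation
    {V : Type*} [NormedAddCommGroup V] [InnerProductSpace ℝ V] [FiniteDimensional ℝ V]
    (L : V →ₗ[ℝ] V) (hL : ∀ v w : V, ⟪L v, w⟫ = ⟪v, L w⟫)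
    (Δt : ℝ) (hΔt : 0 < Δt) (b : V)
    (B : V →ₗ[ℝ] V)
    (hB1 : B ∘ₗ (LinearMap.id + Δt • (L ∘ₗ L)) = LinearMap.id)
    (hB2 : (LinearMap.id + Δt • (L ∘ₗ L)) ∘ₗ B = LinearMap.id)
    (u₀ u₁ q₁ : V) (r₀ r₁ : ℝ)
    (h1 : (1 / Δt) • (u₁ - u₀) = -(L q₁) - r₁ • b)
    (h2 : q₁ = L u₁)
    (h3 : (r₁ - r₀) / Δt = (1 / 2) * ⟪b, (1 / Δt) • (u₁ - u₀)⟫)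
    (ξ : V) (hξ : ξ = u₀ - (Δt * r₀) • b + ((Δt / 2) * ⟪b, u₀⟫) • b) :
    r₁ = r₀ - (1 / 2) * ⟪b, u₀⟫ +
      (1 / 2) * (⟪b, B ξ⟫ / (1 + (Δt / 2) * ⟪b, B b⟫)) := by
  have hΔt' : (Δt : ℝ) ≠ 0 := ne_of_gt hΔt
  set β : ℝ := ⟪b, B b⟫ with hβdef
  -- b = B b + Δt • L (L (B b))
  have hb : b = B b + Δt • L (L (B b)) := by
    have := congrArg (fun f => f b) hB2
    simpa [LinearMap.comp_apply, LinearMap.add_apply, LinearMap.smul_apply] using this.symm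
  -- β is nonnegative
  have hβ0 : 0 ≤ β := by
    have hcalc : β = ‖B b‖ ^ 2 + Δt * ‖L (B b)‖ ^ 2 := by
      rw [hβdef]
      nth_rewrite 1 [hb]
      rw [inner_add_left, real_inner_smul_left, hL (L (B b)) (B b)]
      simp [real_inner_self_eq_norm_sq]
    rw [hcalc]; positivity
  have hden : (0:ℝ) < 1 + (Δt / 2) * β := by positivity
  have hden' : (1:ℝ) + (Δt / 2) * β ≠ 0 := ne_of_gt hden
  -- u₁ = B (u₀ - (Δt * r₁) • b)
  have hAu₁ : u₁ + Δt • L (L u₁) = u₀ - (Δt * r₁) • b := by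
    have h1' := congrArg (fun v => Δt • v) h1
    simp only [smul_smul, mul_one_div, div_self hΔt', one_smul, h2] at h1'
    rw [smul_sub, smul_neg, smul_smul] at h1'
    have : u₁ - u₀ = -(Δt • L (L u₁)) - (Δt * r₁) • b := h1'
    linear_combination (norm := module) this
  have hu₁ : u₁ = B (u₀ - (Δt * r₁) • b) := by
    have := congrArg (fun f => f u₁) hB1
    simp only [LinearMap.comp_apply, LinearMap.add_apply, LinearMap.smul_apply,
      LinearMap.id_apply] at this
    rw [← this, ← hAu₁]
  -- inner products
  have hs : ⟪b, u₁⟫ = ⟪b, B u₀⟫ - Δt * r₁ * β := by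
    rw [hu₁, map_sub, map_smul, inner_sub_right, real_inner_smul_right, hβdef]
  have hξinner : ⟪b, B ξ⟫ = ⟪b, B u₀⟫ - Δt * r₀ * β + (Δt / 2) * ⟪b, u₀⟫ * β := by
    rw [hξ, map_add, map_sub, map_smul, map_smul, inner_add_right, inner_sub_right,
      real_inner_smul_right, real_inner_smul_right, hβdef]
  -- relation from h3
  have h3' : r₁ - r₀ = (1 / 2) * (⟪b, u₁⟫ - ⟪b, u₀⟫) := by
    rw [real_inner_smul_right, inner_sub_right] at h3
    have h4 := congrArg (· * Δt) h3
    rw [div_mul_cancel₀ _ hΔt'] at h4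
    rw [h4]; field_simp
  -- solve for r₁
  have key : r₁ * (2 + Δt * β) = 2 * r₀ + ⟪b, B u₀⟫ - ⟪b, u₀⟫ := by
    rw [hs] at h3'
    linear_combination 2 * h3'
  have h2β : (2:ℝ) + Δt * β ≠ 0 := by positivity
  have hr₁ : r₁ = (2 * r₀ + ⟪b, B u₀⟫ - ⟪b, u₀⟫) / (2 + Δt * β) := by
    field_simp [h2β]
    linear_combination key
  rw [hr₁, hξinner]
  field_simp
  ring
end

section
/- Let V be a finite-dimensional real inner product space, L : V → V a symmetric linear map, Δt > 0, b ∈ V, and B = (I + Δt L²)⁻¹. Suppose u₀, u₁, q₁ ∈ V and r₀, r₁ ∈ ℝ satisfy the first-order SAV-DG step: (u₁ − u₀)/Δt = −L q₁ − r₁ b, q₁ = L u₁, and (r₁ − r₀)/Δt = (1/2) ⟪b, (u₁ − u₀)/Δt⟫. Set ξ = u₀ − Δt r₀ b + (Δt/2) ⟪b, u₀⟫ b. Then ⟪b, u₁⟫ = ⟪b, B ξ⟫ / (1 + (Δt/2) ⟪b, B b⟫). -/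
open RealInnerProductSpace

/-- Key intermediate identity for the pre-evaluation of the auxiliary variable in
the first-order SAV-DG scheme: with `B = (I + Δt L²)⁻¹` and
`ξ = u₀ − Δt r₀ b + (Δt/2)⟪b, u₀⟫ b`, one has
`⟪b, u₁⟫ = ⟪b, B ξ⟫ / (1 + (Δt/2)⟪b, B b⟫)`. -/
theorem sav_dg_first_order_nonlocal_term
    {V : Type*} [NormedAddCommGroup V] [InnerProductSpace ℝ V] [FiniteDimensional ℝ V]
    (L : V →ₗ[ℝ] V) (hL : ∀ v w : V, ⟪L v, w⟫ = ⟪v, L w⟫)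
    (Δt : ℝ) (hΔt : 0 < Δt) (b : V)
    (B : V →ₗ[ℝ] V)
    (hB1 : B ∘ₗ (LinearMap.id + Δt • (L ∘ₗ L)) = LinearMap.id)
    (hB2 : (LinearMap.id + Δt • (L ∘ₗ L)) ∘ₗ B = LinearMap.id)
    (u₀ u₁ q₁ : V) (r₀ r₁ : ℝ)
    (h1 : (1 / Δt) • (u₁ - u₀) = -(L q₁) - r₁ • b)
    (h2 : q₁ = L u₁)
    (h3 : (r₁ - r₀) / Δt = (1 / 2) * ⟪b, (1 / Δt) • (u₁ - u₀)⟫)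
    (ξ : V) (hξ : ξ = u₀ - (Δt * r₀) • b + ((Δt / 2) * ⟪b, u₀⟫) • b) :
    ⟪b, u₁⟫ = ⟪b, B ξ⟫ / (1 + (Δt / 2) * ⟪b, B b⟫) := by
  have hne : Δt ≠ 0 := ne_of_gt hΔt
  -- Step 1: (I + Δt L²) u₁ = u₀ - (Δt * r₁) • b
  have heq1 : u₁ + Δt • (L (L u₁)) = u₀ - (Δt * r₁) • b := by
    have := congrArg (fun v => Δt • v) h1
    simp only [smul_sub, smul_smul, mul_one_div, div_self hne, one_smul, h2] at this
    have h' : u₁ - u₀ = Δt • (-(L (L u₁))) - (Δt * r₁) • b := this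
    rw [smul_neg] at h'
    linear_combination (norm := module) h'
  -- Step 2: r₁ = r₀ + (1/2) ⟪b, u₁ - u₀⟫
  have hr : r₁ = r₀ + (1 / 2) * (⟪b, u₁⟫ - ⟪b, u₀⟫) := by
    have h3' : (r₁ - r₀) / Δt = (1 / 2) * ((1 / Δt) * ⟪b, u₁ - u₀⟫) := by
      rw [h3, real_inner_smul_right]
    rw [inner_sub_right] at h3'
    field_simp at h3'
    have h4 : (r₁ - r₀) * 2 = ⟪b, u₁⟫ - ⟪b, u₀⟫ := by
      apply mul_right_cancel₀ hne
      linear_combination Δt * h3'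
    linarith
  -- Step 3: rewrite RHS of heq1 via ξ
  have heq2 : u₁ + Δt • (L (L u₁)) = ξ - ((Δt / 2) * ⟪b, u₁⟫) • b := by
    rw [heq1, hξ, hr]
    rw [show Δt * (r₀ + 1 / 2 * (⟪b, u₁⟫ - ⟪b, u₀⟫))
        = Δt * r₀ + (Δt / 2 * ⟪b, u₁⟫ - Δt / 2 * ⟪b, u₀⟫) by ring]
    rw [add_smul, sub_smul]
    abel
  -- Step 4: apply B
  have heq3 : u₁ = B ξ - ((Δt / 2) * ⟪b, u₁⟫) • B b := by
    have happ : B (u₁ + Δt • (L (L u₁))) = u₁ := by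
      have := congrArg (fun f => f u₁) hB1
      simpa [LinearMap.comp_apply] using this
    calc u₁ = B (u₁ + Δt • (L (L u₁))) := happ.symm
      _ = B (ξ - ((Δt / 2) * ⟪b, u₁⟫) • b) := by rw [heq2]
      _ = B ξ - ((Δt / 2) * ⟪b, u₁⟫) • B b := by rw [map_sub, map_smul]
  -- Step 5: inner with b
  have hinner : ⟪b, u₁⟫ = ⟪b, B ξ⟫ - (Δt / 2) * ⟪b, u₁⟫ * ⟪b, B b⟫ := by
    calc ⟪b, u₁⟫ = ⟪b, B ξ - ((Δt / 2) * ⟪b, u₁⟫) • B b⟫ := by rw [← heq3]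
      _ = ⟪b, B ξ⟫ - (Δt / 2) * ⟪b, u₁⟫ * ⟪b, B b⟫ := by
          rw [inner_sub_right, real_inner_smul_right]
  -- Step 6: positivity of ⟪b, B b⟫
  have hpos : 0 ≤ ⟪b, B b⟫ := by
    have hb : B b + Δt • (L (L (B b))) = b := by
      have := congrArg (fun f => f b) hB2
      simpa [LinearMap.comp_apply] using this
    have : ⟪b, B b⟫ = ⟪B b, B b⟫ + Δt * ⟪L (B b), L (B b)⟫ := by
      have step : ⟪b, B b⟫ = ⟪B b + Δt • L (L (B b)), B b⟫ := by rw [hb]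
      rw [step, inner_add_left, real_inner_smul_left, hL]
    rw [this]
    have h1' : (0:ℝ) ≤ ⟪B b, B b⟫ := real_inner_self_nonneg
    have h2' : (0:ℝ) ≤ ⟪L (B b), L (B b)⟫ := real_inner_self_nonneg
    nlinarith
  have hden : 1 + (Δt / 2) * ⟪b, B b⟫ ≠ 0 := by positivity
  field_simp
  linarith [hinner]
end

section
/- Let V be a finite-dimensional real inner product space, L : V → V a symmetric linear map, Δt > 0, b ∈ V, and B = (I + (Δt/2) L²)⁻¹. Suppose u₀, u₁, q₀, q₁ ∈ V and r₀, r₁ ∈ ℝ satisfy the second-order SAV-DG step: (u₁ − u₀)/Δt = −L ((q₀ + q₁)/2) − ((r₀ + r₁)/2) b, q₀ = L u₀, q₁ = L u₁, and (r₁ − r₀)/Δt = (1/2) ⟪b, (u₁ − u₀)/Δt⟫. Set ξ = u₀ − (Δt/2) r₀ b + (Δt/4) ⟪b, u₀⟫ b. Then (r₀ + r₁)/2 = r₀ − (1/2)⟪b, u₀⟫ + (1/2) R, where R = ⟪b, B ξ⟫ / (1 + (Δt/4) ⟪b, B b⟫). -/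
open RealInnerProductSpace

/-- Pre-evaluation formula for the midpoint value of the auxiliary variable in the
second-order SAV-DG scheme: with `B = (I + (Δt/2) L²)⁻¹` and
`ξ = u₀ − (Δt/2) r₀ b + (Δt/4)⟪b, u₀⟫ b`, one has
`(r₀ + r₁)/2 = r₀ − (1/2)⟪b, u₀⟫ + (1/2) R` where
`R = ⟪b, B ξ⟫ / (1 + (Δt/4)⟪b, B b⟫)`. -/
theorem sav_dg_second_order_pre_evaluation
    {V : Type*} [NormedAddCommGroup V] [InnerProductSpace ℝ V] [FiniteDimensional ℝ V]
    (L : V →ₗ[ℝ] V) (hL : ∀ v w : V, ⟪L v, w⟫ = ⟪v, L w⟫)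
    (Δt : ℝ) (hΔt : 0 < Δt) (b : V)
    (B : V →ₗ[ℝ] V)
    (hB1 : B ∘ₗ (LinearMap.id + (Δt / 2) • (L ∘ₗ L)) = LinearMap.id)
    (hB2 : (LinearMap.id + (Δt / 2) • (L ∘ₗ L)) ∘ₗ B = LinearMap.id)
    (u₀ u₁ q₀ q₁ : V) (r₀ r₁ : ℝ)
    (h1 : (1 / Δt) • (u₁ - u₀) = -(L ((1 / 2 : ℝ) • (q₀ + q₁))) - ((r₀ + r₁) / 2) • b)
    (h2 : q₀ = L u₀)
    (h3 : q₁ = L u₁)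
    (h4 : (r₁ - r₀) / Δt = (1 / 2) * ⟪b, (1 / Δt) • (u₁ - u₀)⟫)
    (ξ : V) (hξ : ξ = u₀ - ((Δt / 2) * r₀) • b + ((Δt / 4) * ⟪b, u₀⟫) • b) :
    (r₀ + r₁) / 2 = r₀ - (1 / 2) * ⟪b, u₀⟫ +
      (1 / 2) * (⟪b, B ξ⟫ / (1 + (Δt / 4) * ⟪b, B b⟫)) := by
  subst h2 h3 hξ
  have hne : Δt ≠ 0 := ne_of_gt hΔt
  set s : ℝ := (r₀ + r₁) / 2 with hs
  -- positivity of the denominator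
  have hb : b = B b + (Δt / 2) • L (L (B b)) := by
    have := LinearMap.congr_fun hB2 b
    simpa [LinearMap.comp_apply, LinearMap.add_apply, LinearMap.smul_apply] using this.symm
  have hBbnn : 0 ≤ ⟪b, B b⟫ := by
    have : ⟪b, B b⟫ = ‖B b‖ ^ 2 + (Δt / 2) * ‖L (B b)‖ ^ 2 := by
      have e : ⟪b, B b⟫ = ⟪B b + (Δt / 2) • L (L (B b)), B b⟫ := by rw [← hb]
      rw [e, inner_add_left, real_inner_smul_left, hL (L (B b)) (B b),
        real_inner_self_eq_norm_sq, real_inner_self_eq_norm_sq]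
    rw [this]
    positivity
  have hD : (0:ℝ) < 1 + (Δt / 4) * ⟪b, B b⟫ := by nlinarith
  -- the update for u₁
  have hA : u₁ + (Δt / 2) • L (L u₁) =
      (2:ℝ) • u₀ - (u₀ + (Δt / 2) • L (L u₀)) - (Δt * s) • b := by
    have h1' : u₁ - u₀ = Δt • ((1 / Δt) • (u₁ - u₀)) := by
      rw [smul_smul]; field_simp; rw [one_smul]
    rw [h1, map_smul, map_add] at h1'
    linear_combination (norm := module) h1'
  have hu1 : u₁ = (2:ℝ) • B u₀ - u₀ - (Δt * s) • B b := by
    have e1 : B (u₁ + (Δt / 2) • L (L u₁)) = u₁ := by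
      simpa [LinearMap.comp_apply, LinearMap.add_apply, LinearMap.smul_apply] using
        LinearMap.congr_fun hB1 u₁
    have e0 : B (u₀ + (Δt / 2) • L (L u₀)) = u₀ := by
      simpa [LinearMap.comp_apply, LinearMap.add_apply, LinearMap.smul_apply] using
        LinearMap.congr_fun hB1 u₀
    have := congrArg B hA
    rwa [e1, map_sub, map_sub, map_smul, map_smul, e0] at this
  -- the update for r
  have hr : r₁ - r₀ = (1 / 2) * ⟪b, u₁ - u₀⟫ := by
    rw [real_inner_smul_right] at h4
    field_simp at h4
    have := h4
    linarith
  have hinner : ⟪b, u₁ - u₀⟫ =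
      2 * ⟪b, B u₀⟫ - 2 * ⟪b, u₀⟫ - (Δt * s) * ⟪b, B b⟫ := by
    rw [hu1]
    simp [inner_sub_right, real_inner_smul_right]
    ring
  have hxi : ⟪b, B (u₀ - ((Δt / 2) * r₀) • b + ((Δt / 4) * ⟪b, u₀⟫) • b)⟫ =
      ⟪b, B u₀⟫ - ((Δt / 2) * r₀) * ⟪b, B b⟫ + ((Δt / 4) * ⟪b, u₀⟫) * ⟪b, B b⟫ := by
    rw [map_add, map_sub, map_smul, map_smul]
    simp [inner_add_right, inner_sub_right, real_inner_smul_right]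
  rw [hxi]
  rw [hinner] at hr
  field_simp
  nlinarith [hr, hs]
end

section
/- Let V be a finite-dimensional real inner product space and L : V → V a symmetric linear map. Let I ⊆ ℝ be an open interval, and let u : I → V, r : I → ℝ be differentiable and b : I → V be any function such that for all t ∈ I: u'(t) = −L (L u(t)) − r(t) b(t) and r'(t) = (1/2) ⟪b(t), u'(t)⟫. Then for every t ∈ I the function t ↦ (1/2)‖L u(t)‖² + r(t)² is differentiable with derivative equal to −‖u'(t)‖²; in particular it is non-increasing on I. -/
open RealInnerProductSpace

/-- Modified energy dissipation law for the semi-discrete SAV system: if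
`u' = −L(L u) − r b` and `r' = (1/2)⟪b, u'⟫` on an open interval `I`, then
`t ↦ (1/2)‖L u(t)‖² + r(t)²` has derivative `−‖u'(t)‖²` at each `t ∈ I`,
and in particular is non-increasing on `I`. -/
theorem sav_dg_semi_discrete_energy_dissipation
    {V : Type*} [NormedAddCommGroup V] [InnerProductSpace ℝ V] [FiniteDimensional ℝ V]
    (L : V →ₗ[ℝ] V) (hL : ∀ v w : V, ⟪L v, w⟫ = ⟪v, L w⟫)
    (I : Set ℝ) (hIopen : IsOpen I) (hIconn : I.OrdConnected)
    (u u' : ℝ → V) (r r' : ℝ → ℝ) (b : ℝ → V)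
    (hu : ∀ t ∈ I, HasDerivAt u (u' t) t)
    (hr : ∀ t ∈ I, HasDerivAt r (r' t) t)
    (h1 : ∀ t ∈ I, u' t = -(L (L (u t))) - r t • b t)
    (h2 : ∀ t ∈ I, r' t = (1 / 2) * ⟪b t, u' t⟫) :
    (∀ t ∈ I, HasDerivAt (fun s => (1 / 2) * ‖L (u s)‖ ^ 2 + (r s) ^ 2)
        (-‖u' t‖ ^ 2) t) ∧
    AntitoneOn (fun s => (1 / 2) * ‖L (u s)‖ ^ 2 + (r s) ^ 2) I := by
  have key : ∀ t ∈ I, HasDerivAt (fun s => (1 / 2) * ‖L (u s)‖ ^ 2 + (r s) ^ 2)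
      (-‖u' t‖ ^ 2) t := by
    intro t ht
    set Lc := L.toContinuousLinearMap
    have hLu : HasDerivAt (fun s => L (u s)) (L (u' t)) t := by
      have := (Lc.hasFDerivAt.comp t (hu t ht).hasFDerivAt).hasDerivAt
      simp at this
      exact this
    have hinner : HasDerivAt (fun s => ⟪L (u s), L (u s)⟫)
        (⟪L (u t), L (u' t)⟫ + ⟪L (u' t), L (u t)⟫) t := hLu.inner ℝ hLu
    have hnorm : HasDerivAt (fun s => (1 / 2) * ‖L (u s)‖ ^ 2)
        (⟪L (u t), L (u' t)⟫) t := by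
      have := hinner.const_mul (1 / 2 : ℝ)
      have heq : (fun s => (1 / 2) * ⟪L (u s), L (u s)⟫) =
          fun s => (1 / 2) * ‖L (u s)‖ ^ 2 := by
        funext s; rw [real_inner_self_eq_norm_sq]
      rw [heq] at this
      refine this.congr_deriv ?_
      rw [real_inner_comm (L (u' t))]
      ring
    have hr2 : HasDerivAt (fun s => (r s) ^ 2) (2 * r t * r' t) t := by
      refine ((hr t ht).pow 2).congr_deriv ?_
      norm_num
    have := hnorm.add hr2
    refine this.congr_deriv ?_
    symm
    rw [h2 t ht]
    have hsplit : ⟪L (u t), L (u' t)⟫ = ⟪L (L (u t)), u' t⟫ := (hL (L (u t)) (u' t)).symm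
    have : (-‖u' t‖ ^ 2 : ℝ) = ⟪-(u' t), u' t⟫ := by
      rw [inner_neg_left, real_inner_self_eq_norm_sq]
    rw [this, hsplit]
    have hneg : -(u' t) = L (L (u t)) + r t • b t := by
      rw [h1 t ht]; abel
    rw [hneg, inner_add_left, real_inner_smul_left]
    ring
  refine ⟨key, ?_⟩
  have hconv : Convex ℝ I := (convex_iff_ordConnected).2 hIconn
  have hintI : interior I = I := hIopen.interior_eq
  apply antitoneOn_of_deriv_nonpos hconv
  · exact fun x hx => ((key x hx).continuousAt).continuousWithinAt
  · intro x hx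
    rw [hintI] at hx
    exact ((key x hx).differentiableAt).differentiableWithinAt
  · intro x hx
    rw [hintI] at hx
    rw [(key x hx).deriv]
    simp [neg_nonpos]
    try positivity
end
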